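/- arXiv:2010.15542 — 5 statements merged into one kernel-verified Lean document; each statement's English description precedes it below -/
import Mathlib

section
/- The function G attains its maximum on C(γ) only at points with all entries strictly positive. More precisely, if μ ∈ C(γ) has some entry equal to 0, then μ is not a maximum point of G on C(γ). -/
/-- The set `C(γ)` of `s × q` matrices with nonnegative entries whose `k`-th row sums to `γ k`. -/
def Cset (s q : ℕ) (γ : Fin s → ℝ) : Set (Fin s → Fin q → ℝ) :=
  {μ | (∀ k c, 0 ≤ μ k c) ∧ ∀ k, ∑ c, μ k c = γ k}

/-- The free energy functional `G` of the block spin Potts model. -/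
noncomputable def G (s q : ℕ) (α β : ℝ) (μ : Fin s → Fin q → ℝ) : ℝ :=
  (∑ c, ∑ k, β / 2 * (μ k c) ^ 2)
    + (∑ c, ∑ k, ∑ k' ∈ Finset.univ.filter (fun k' => k' ≠ k), α / 2 * (μ k c * μ k' c))
    - ∑ k, ∑ c, μ k c * Real.log (μ k c)

lemma one_point_diff {n : ℕ} (F F' : Fin n → ℝ) (i : Fin n)
    (h : ∀ j, j ≠ i → F j = F' j) :
    ∑ j, F j = ∑ j, F' j + (F i - F' i) := by
  rw [Finset.sum_eq_sum_sdiff_singleton_add (Finset.mem_univ i) F,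
      Finset.sum_eq_sum_sdiff_singleton_add (Finset.mem_univ i) F']
  have he : ∑ j ∈ Finset.univ \ {i}, F j = ∑ j ∈ Finset.univ \ {i}, F' j :=
    Finset.sum_congr rfl (fun j hj => h j (by simpa using (Finset.mem_sdiff.mp hj).2))
  rw [he]; ring

lemma two_point_diff {n : ℕ} (F F' : Fin n → ℝ) (i₀ i₁ : Fin n) (hne : i₀ ≠ i₁)
    (h : ∀ j, j ≠ i₀ → j ≠ i₁ → F j = F' j) :
    ∑ j, F j = ∑ j, F' j + (F i₀ - F' i₀) + (F i₁ - F' i₁) := by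
  have h0 : i₀ ∈ Finset.univ \ ({i₁} : Finset (Fin n)) := by simp [hne]
  rw [Finset.sum_eq_sum_sdiff_singleton_add (Finset.mem_univ i₁) F,
      Finset.sum_eq_sum_sdiff_singleton_add (Finset.mem_univ i₁) F',
      Finset.sum_eq_sum_sdiff_singleton_add h0 F,
      Finset.sum_eq_sum_sdiff_singleton_add h0 F']
  have he : ∑ j ∈ (Finset.univ \ {i₁}) \ {i₀}, F j = ∑ j ∈ (Finset.univ \ {i₁}) \ {i₀}, F' j := by
    refine Finset.sum_congr rfl (fun j hj => ?_)
    simp only [Finset.mem_sdiff, Finset.mem_singleton] at hj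
    exact h j hj.2 hj.1.2
  rw [he]; ring

lemma pair_sum {n : ℕ} (α : ℝ) (x : Fin n → ℝ) :
    ∑ k, ∑ k' ∈ Finset.univ.filter (fun k' => k' ≠ k), α / 2 * (x k * x k')
      = α / 2 * ((∑ k, x k) ^ 2 - ∑ k, (x k) ^ 2) := by
  have h : ∀ k : Fin n, ∑ k' ∈ Finset.univ.filter (fun k' => k' ≠ k), α / 2 * (x k * x k')
      = α / 2 * (x k * (∑ k', x k')) - α / 2 * (x k * x k) := by
    intro k
    have he : Finset.univ.filter (fun k' => k' ≠ k) = Finset.univ.erase k := by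
      ext k'; simp [Finset.mem_erase]
    rw [he, Finset.sum_erase_eq_sub (Finset.mem_univ k)]
    simp [Finset.mul_sum]
  rw [Finset.sum_congr rfl (fun k _ => h k), Finset.sum_sub_distrib]
  rw [← Finset.mul_sum, ← Finset.mul_sum, ← Finset.sum_mul]
  ring

lemma G_eq (s q : ℕ) (α β : ℝ) (μ : Fin s → Fin q → ℝ) :
    G s q α β μ = (∑ c, (α / 2 * (∑ k, μ k c) ^ 2 + (β - α) / 2 * ∑ k, (μ k c) ^ 2))
      - ∑ k, ∑ c, μ k c * Real.log (μ k c) := by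
  unfold G
  congr 1
  rw [← Finset.sum_add_distrib]
  refine Finset.sum_congr rfl fun c _ => ?_
  rw [pair_sum α (fun k => μ k c), ← Finset.mul_sum]
  ring

lemma sum_row_update {s q : ℕ} (μ : Fin s → Fin q → ℝ) (k₀ : Fin s) (r : Fin q → ℝ)
    (g : ℝ → ℝ) (c : Fin q) :
    ∑ k, g (Function.update μ k₀ r k c) = ∑ k, g (μ k c) + (g (r c) - g (μ k₀ c)) := by
  have := one_point_diff (fun k => g (Function.update μ k₀ r k c)) (fun k => g (μ k c)) k₀
    (fun j hj => by simp [Function.update_of_ne hj])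
  simpa using this

set_option maxHeartbeats 1000000 in
theorem maximizer_strictly_positive (s q : ℕ) (hs : 1 ≤ s) (hq : 1 ≤ q)
    (α β : ℝ) (hα : 0 < α) (hαβ : α < β)
    (γ : Fin s → ℝ) (hγ : ∀ k, γ k ∈ Set.Ioo (0 : ℝ) 1) (hγ1 : ∑ k, γ k = 1)
    (μ : Fin s → Fin q → ℝ) (hμ : μ ∈ Cset s q γ) (h0 : ∃ k c, μ k c = 0) :
    ¬ IsMaxOn (G s q α β) (Cset s q γ) μ := by
  classical
  obtain ⟨hpos, hsum⟩ := hμ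
  obtain ⟨k₀, c₀, hzero⟩ := h0
  have hγk : 0 < γ k₀ := (hγ k₀).1
  have hex : ∃ c₁, 0 < μ k₀ c₁ := by
    by_contra hcon
    push_neg at hcon
    have hz : ∑ c, μ k₀ c = 0 :=
      Finset.sum_eq_zero fun c _ => le_antisymm (hcon c) (hpos k₀ c)
    rw [hsum k₀] at hz; linarith
  obtain ⟨c₁, ha0⟩ := hex
  have hc01 : c₀ ≠ c₁ := by
    intro h; rw [h] at hzero; rw [hzero] at ha0; exact lt_irrefl 0 ha0
  set a : ℝ := μ k₀ c₁ with ha_def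
  have haγ : a ≤ γ k₀ := by
    rw [← hsum k₀]
    exact Finset.single_le_sum (fun c _ => hpos k₀ c) (Finset.mem_univ c₁)
  have ha1 : a < 1 := lt_of_le_of_lt haγ (hγ k₀).2
  set t : ℝ := a / 2 * Real.exp (-(β + 1)) with ht_def
  have ht0 : 0 < t := by positivity
  have hβ0 : 0 < β := lt_trans hα hαβ
  have hexp1 : Real.exp (-(β + 1)) < 1 := by
    rw [Real.exp_lt_one_iff]; linarith
  have hta : t ≤ a / 2 := by
    rw [ht_def]
    nlinarith [ha0]
  have hat : a / 2 ≤ a - t := by linarith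
  have hat0 : 0 < a - t := by linarith
  set r : Fin q → ℝ := Function.update (Function.update (μ k₀) c₀ t) c₁ (a - t) with hr
  set ν : Fin s → Fin q → ℝ := Function.update μ k₀ r with hν
  have hrc₀ : r c₀ = t := by
    rw [hr, Function.update_of_ne hc01, Function.update_self]
  have hrc₁ : r c₁ = a - t := by rw [hr, Function.update_self]
  have hrother : ∀ c, c ≠ c₀ → c ≠ c₁ → r c = μ k₀ c := by
    intro c h1 h2
    rw [hr, Function.update_of_ne h2, Function.update_of_ne h1]
  have hνk₀ : ν k₀ = r := by rw [hν, Function.update_self]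
  have hνk : ∀ k, k ≠ k₀ → ν k = μ k := fun k hk => by
    rw [hν, Function.update_of_ne hk]
  -- membership
  have hνmem : ν ∈ Cset s q γ := by
    constructor
    · intro k c
      by_cases hk : k = k₀
      · rw [hk, hνk₀]
        by_cases h1 : c = c₀
        · subst h1; rw [hrc₀]; linarith
        · by_cases h2 : c = c₁
          · subst h2; rw [hrc₁]; linarith
          · rw [hrother c h1 h2]; exact hpos k₀ c
      · rw [hνk k hk]; exact hpos k c
    · intro k
      by_cases hk : k = k₀
      · rw [hk, hνk₀]
        have h2p := two_point_diff r (μ k₀) c₀ c₁ hc01 hrother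
        rw [h2p, hsum k₀, hrc₀, hrc₁, hzero, ← ha_def]
        ring
      · rw [hνk k hk]; exact hsum k
  -- column sums and square sums
  have hq1 : ∀ c, ∑ k, ν k c = ∑ k, μ k c + (r c - μ k₀ c) :=
    fun c => sum_row_update μ k₀ r (fun x => x) c
  have hq2 : ∀ c, ∑ k, (ν k c) ^ 2 = ∑ k, (μ k c) ^ 2 + ((r c) ^ 2 - (μ k₀ c) ^ 2) :=
    fun c => sum_row_update μ k₀ r (fun x => x ^ 2) c
  set T₀ : ℝ := ∑ k, μ k c₀ with hT₀
  set T₁ : ℝ := ∑ k, μ k c₁ with hT₁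
  -- quadratic part difference
  have hquad : (∑ c, (α / 2 * (∑ k, ν k c) ^ 2 + (β - α) / 2 * ∑ k, (ν k c) ^ 2))
      = (∑ c, (α / 2 * (∑ k, μ k c) ^ 2 + (β - α) / 2 * ∑ k, (μ k c) ^ 2))
        + (α / 2 * ((T₀ + t) ^ 2 - T₀ ^ 2) + (β - α) / 2 * t ^ 2)
        + (α / 2 * ((T₁ - t) ^ 2 - T₁ ^ 2) + (β - α) / 2 * ((a - t) ^ 2 - a ^ 2)) := by
    have := two_point_diff
      (fun c => α / 2 * (∑ k, ν k c) ^ 2 + (β - α) / 2 * ∑ k, (ν k c) ^ 2)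
      (fun c => α / 2 * (∑ k, μ k c) ^ 2 + (β - α) / 2 * ∑ k, (μ k c) ^ 2)
      c₀ c₁ hc01 ?_
    · rw [this]
      simp only [hq1 c₀, hq1 c₁, hq2 c₀, hq2 c₁, hrc₀, hrc₁, hzero, ← ha_def]
      ring
    · intro c h1 h2
      simp only [hq1 c, hq2 c, hrother c h1 h2]
      ring
  -- entropy part difference
  have hent : (∑ k, ∑ c, ν k c * Real.log (ν k c))
      = (∑ k, ∑ c, μ k c * Real.log (μ k c))
        + (t * Real.log t - 0 * Real.log 0)
        + ((a - t) * Real.log (a - t) - a * Real.log a) := by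
    have hrow : (∑ c, ν k₀ c * Real.log (ν k₀ c))
        = (∑ c, μ k₀ c * Real.log (μ k₀ c))
          + (t * Real.log t - 0 * Real.log 0)
          + ((a - t) * Real.log (a - t) - a * Real.log a) := by
      have := two_point_diff
        (fun c => ν k₀ c * Real.log (ν k₀ c))
        (fun c => μ k₀ c * Real.log (μ k₀ c))
        c₀ c₁ hc01 ?_
      · rw [this]
        simp only [hνk₀, hrc₀, hrc₁, hzero, ← ha_def]
      · intro c h1 h2
        simp only [hνk₀, hrother c h1 h2]
    have hone := one_point_diff
      (fun k => ∑ c, ν k c * Real.log (ν k c))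
      (fun k => ∑ c, μ k c * Real.log (μ k c))
      k₀ (fun j hj => by simp only [hνk j hj])
    rw [hone, hrow]
    ring
  -- bounds
  have hT₀0 : 0 ≤ T₀ := Finset.sum_nonneg fun k _ => hpos k c₀
  have hT₁1 : T₁ ≤ 1 := by
    rw [hT₁, ← hγ1]
    refine Finset.sum_le_sum fun k _ => ?_
    rw [← hsum k]
    exact Finset.single_le_sum (fun c _ => hpos k c) (Finset.mem_univ c₁)
  have hlogt : Real.log t = Real.log (a / 2) - (β + 1) := by
    rw [ht_def, Real.log_mul (by positivity) (Real.exp_ne_zero _), Real.log_exp]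
    ring
  have hlogat : Real.log (a / 2) ≤ Real.log (a - t) :=
    Real.log_le_log (by positivity) hat
  have hkey : t + t * Real.log (a - t) ≤ a * Real.log a - (a - t) * Real.log (a - t) := by
    have h1 : Real.log ((a - t) / a) ≤ (a - t) / a - 1 :=
      Real.log_le_sub_one_of_pos (by positivity)
    rw [Real.log_div (by linarith) (by linarith)] at h1
    have h2 : a * (Real.log (a - t) - Real.log a) ≤ a * ((a - t) / a - 1) :=
      mul_le_mul_of_nonneg_left h1 (le_of_lt ha0)
    have h3 : a * ((a - t) / a - 1) = -t := by field_simp; ring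
    rw [h3] at h2
    nlinarith [h2]
  clear_value t a T₀ T₁ r ν
  -- conclude
  intro hmax
  have hle : G s q α β ν ≤ G s q α β μ := hmax hνmem
  rw [G_eq, G_eq, hquad, hent] at hle
  simp only [Real.log_zero, mul_zero, zero_mul] at hle
  have hM : t * Real.log (a / 2) ≤ t * Real.log (a - t) :=
    mul_le_mul_of_nonneg_left hlogat (le_of_lt ht0)
  have e1 : 0 ≤ α / 2 * ((T₀ + t) ^ 2 - T₀ ^ 2) + (β - α) / 2 * t ^ 2 := by
    nlinarith [mul_nonneg (le_of_lt ht0) hT₀0, sq_nonneg t]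
  have e2 : -(α * t) - (β - α) * t
      ≤ α / 2 * ((T₁ - t) ^ 2 - T₁ ^ 2) + (β - α) / 2 * ((a - t) ^ 2 - a ^ 2) := by
    have hT : t * T₁ ≤ t * 1 := mul_le_mul_of_nonneg_left hT₁1 (le_of_lt ht0)
    have ha1' : t * a ≤ t * 1 := mul_le_mul_of_nonneg_left (le_of_lt ha1) (le_of_lt ht0)
    nlinarith [sq_nonneg t]
  have e6 : t * β + 2 * t ≤ -(t * Real.log t) + t * Real.log (a - t) + t := by
    rw [hlogt]
    nlinarith [hM]
  nlinarith [hkey, e1, e2, e6, ht0]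
end

section
/- Let μ ∈ C⁺(γ) be a critical point of G, i.e. satisfy β(μ_{kc} − γ_k/q) + α ∑_{k'≠k} (μ_{k'c} − γ_{k'}/q) = log(μ_{kc} / (∏_{d=1}^q μ_{kd})^{1/q}) for all k, c. If μ_{kc} = μ_{kc'} for some row k and columns c ≠ c', then μ_{k'c} = μ_{k'c'} for all rows k', provided the rows of μ are increasingly ordered. -/
/-- The critical (Lagrange) equations for the block spin Potts free energy `G`. -/
def IsCritical (s q : ℕ) (α β : ℝ) (γ : Fin s → ℝ) (μ : Fin s → Fin q → ℝ) : Prop :=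
  ∀ k c, β * (μ k c - γ k / q)
      + α * ∑ k' ∈ Finset.univ.filter (fun k' => k' ≠ k), (μ k' c - γ k' / q)
    = Real.log (μ k c / (∏ d, μ k d) ^ ((1 : ℝ) / q))

lemma aux_propagate (s q : ℕ) (α β : ℝ) (hα : 0 < α)
    (γ : Fin s → ℝ) (μ : Fin s → Fin q → ℝ)
    (hmono : ∀ k, Monotone (μ k))
    (hcrit : IsCritical s q α β γ μ)
    (k : Fin s) (c c' : Fin q) (hle : c ≤ c') (heq : μ k c = μ k c') :
    ∀ k', μ k' c = μ k' c' := by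
  have h1 := hcrit k c
  have h2 := hcrit k c'
  rw [heq] at h1
  have hAB : α * ∑ k' ∈ Finset.univ.filter (fun k' => k' ≠ k), (μ k' c - γ k' / q)
      = α * ∑ k' ∈ Finset.univ.filter (fun k' => k' ≠ k), (μ k' c' - γ k' / q) := by
    have := h1.trans h2.symm
    linarith
  have hS : ∑ k' ∈ Finset.univ.filter (fun k' => k' ≠ k), (μ k' c' - μ k' c) = 0 := by
    have h3 := mul_left_cancel₀ hα.ne' hAB
    rw [Finset.sum_sub_distrib]
    have h4 : ∀ k' ∈ Finset.univ.filter (fun k' => k' ≠ k),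
        μ k' c' - γ k' / q = (μ k' c' - γ k' / q) := fun _ _ => rfl
    have e1 : ∑ k' ∈ Finset.univ.filter (fun k' => k' ≠ k), (μ k' c - γ k' / q)
        = ∑ k' ∈ Finset.univ.filter (fun k' => k' ≠ k), μ k' c
          - ∑ k' ∈ Finset.univ.filter (fun k' => k' ≠ k), (γ k' / q) :=
      Finset.sum_sub_distrib _ _
    have e2 : ∑ k' ∈ Finset.univ.filter (fun k' => k' ≠ k), (μ k' c' - γ k' / q)
        = ∑ k' ∈ Finset.univ.filter (fun k' => k' ≠ k), μ k' c'
          - ∑ k' ∈ Finset.univ.filter (fun k' => k' ≠ k), (γ k' / q) :=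
      Finset.sum_sub_distrib _ _
    rw [e1, e2] at h3
    linarith
  have hzero := (Finset.sum_eq_zero_iff_of_nonneg
    (fun k' _ => sub_nonneg.mpr (hmono k' hle))).mp hS
  intro k'
  by_cases hk : k' = k
  · rw [hk]; exact heq
  · have := hzero k' (Finset.mem_filter.mpr ⟨Finset.mem_univ _, hk⟩)
    linarith

theorem critical_equal_entries_propagate (s q : ℕ) (α β : ℝ) (hα : 0 < α) (hαβ : α < β)
    (γ : Fin s → ℝ) (hγ : ∀ k, γ k ∈ Set.Ioo (0 : ℝ) 1) (hγ1 : ∑ k, γ k = 1)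
    (μ : Fin s → Fin q → ℝ) (hpos : ∀ k c, 0 < μ k c) (hsum : ∀ k, ∑ c, μ k c = γ k)
    (hmono : ∀ k, Monotone (μ k))
    (hcrit : IsCritical s q α β γ μ)
    (k : Fin s) (c c' : Fin q) (hcc' : c ≠ c') (heq : μ k c = μ k c') :
    ∀ k', μ k' c = μ k' c' := by
  rcases le_total c c' with hle | hle
  · exact aux_propagate s q α β hα γ μ hmono hcrit k c c' hle heq
  · intro k'
    exact (aux_propagate s q α β hα γ μ hmono hcrit k c' c hle heq.symm k').symm
end

section
/- Let μ ∈ C⁺(γ) be a critical point of G with increasingly ordered rows, satisfying the critical equations. Then each row of μ takes at most two distinct values: there are no three columns c < c' < c'' with μ_{kc} < μ_{kc'} < μ_{kc''} for any row k. -/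
/-- Strict concavity of the logarithm: the secant slope on `[x,y]` exceeds that on `[y,z]`. -/
lemma log_secant {x y z : ℝ} (hx : 0 < x) (hxy : x < y) (hyz : y < z) :
    (Real.log z - Real.log y) * (y - x) < (Real.log y - Real.log x) * (z - y) := by
  have hz : 0 < z := hx.trans (hxy.trans hyz)
  have hxz : x < z := hxy.trans hyz
  have hzx : (0:ℝ) < z - x := by linarith
  have ha : (0:ℝ) < (z - y) / (z - x) := by
    apply div_pos <;> linarith
  have hb : (0:ℝ) < (y - x) / (z - x) := by
    apply div_pos <;> linarith
  have hab : (z - y) / (z - x) + (y - x) / (z - x) = 1 := by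
    field_simp; ring
  have key := strictConcaveOn_log_Ioi.2 (Set.mem_Ioi.2 hx) (Set.mem_Ioi.2 hz) hxz.ne ha hb hab
  rw [smul_eq_mul, smul_eq_mul, smul_eq_mul, smul_eq_mul] at key
  have hxyz : (z - y) / (z - x) * x + (y - x) / (z - x) * z = y := by
    field_simp; ring
  rw [hxyz] at key
  rw [div_mul_eq_mul_div, div_mul_eq_mul_div, ← add_div, div_lt_iff₀ hzx] at key
  nlinarith [key]

theorem critical_rows_at_most_two_values (s q : ℕ) (α β : ℝ) (hα : 0 < α) (hαβ : α < β)
    (γ : Fin s → ℝ) (hγ : ∀ k, γ k ∈ Set.Ioo (0 : ℝ) 1) (hγ1 : ∑ k, γ k = 1)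
    (μ : Fin s → Fin q → ℝ) (hpos : ∀ k c, 0 < μ k c) (hsum : ∀ k, ∑ c, μ k c = γ k)
    (hmono : ∀ k, Monotone (μ k))
    (hcrit : IsCritical s q α β γ μ) :
    ¬ ∃ (k : Fin s) (c c' c'' : Fin q), c < c' ∧ c' < c'' ∧
      μ k c < μ k c' ∧ μ k c' < μ k c'' := by
  rintro ⟨k, c, c', c'', hcc', hc'c'', h1, h2⟩
  -- Step A: for any two columns d, e and any row j,
  -- log μ j e - log μ j d = (β - α)(μ j e - μ j d) + α * Σ_i (μ i e - μ i d)
  have stepA : ∀ (d e : Fin q) (j : Fin s), Real.log (μ j e) - Real.log (μ j d)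
      = (β - α) * (μ j e - μ j d) + α * ∑ i, (μ i e - μ i d) := by
    intro d e j
    have he := hcrit j e
    have hd := hcrit j d
    have hPpos : (0:ℝ) < (∏ i, μ j i) ^ ((1:ℝ) / q) := by
      have : (0:ℝ) < ∏ i, μ j i := Finset.prod_pos fun i _ => hpos j i
      positivity
    rw [Real.log_div (hpos j e).ne' hPpos.ne'] at he
    rw [Real.log_div (hpos j d).ne' hPpos.ne'] at hd
    have hfil : ∀ (x : Fin q), ∑ k' ∈ Finset.univ.filter (fun k' => k' ≠ j), (μ k' x - γ k' / q)
        = (∑ i, (μ i x - γ i / q)) - (μ j x - γ j / q) := by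
      intro x
      rw [show Finset.univ.filter (fun k' => k' ≠ j) = Finset.univ.erase j from by
        ext a; simp [Finset.mem_erase]]
      exact Finset.sum_erase_eq_sub (Finset.mem_univ j)
    rw [hfil] at he hd
    have hsumsub : (∑ i, (μ i e - γ i / q)) - (∑ i, (μ i d - γ i / q))
        = ∑ i, (μ i e - μ i d) := by
      rw [← Finset.sum_sub_distrib]
      exact Finset.sum_congr rfl fun i _ => by ring
    linear_combination hd - he + α * hsumsub
  set T1 := ∑ i, (μ i c' - μ i c) with hT1def
  set T2 := ∑ i, (μ i c'' - μ i c') with hT2def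
  have hA1 : ∀ j, Real.log (μ j c') - Real.log (μ j c)
      = (β - α) * (μ j c' - μ j c) + α * T1 := stepA c c'
  have hA2 : ∀ j, Real.log (μ j c'') - Real.log (μ j c')
      = (β - α) * (μ j c'' - μ j c') + α * T2 := stepA c' c''
  have hT1pos : 0 < T1 := by
    apply Finset.sum_pos' (fun i _ => by have := hmono i hcc'.le; linarith)
    exact ⟨k, Finset.mem_univ k, by linarith⟩
  have hT2pos : 0 < T2 := by
    apply Finset.sum_pos' (fun i _ => by have := hmono i hc'c''.le; linarith)
    exact ⟨k, Finset.mem_univ k, by linarith⟩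
  -- every row is strictly increasing at these column pairs
  have hlt1 : ∀ j, μ j c < μ j c' := by
    intro j
    rcases (hmono j hcc'.le).lt_or_eq with h | h
    · exact h
    · exfalso
      have := hA1 j
      rw [h] at this
      nlinarith
  have hlt2 : ∀ j, μ j c' < μ j c'' := by
    intro j
    rcases (hmono j hc'c''.le).lt_or_eq with h | h
    · exact h
    · exfalso
      have := hA2 j
      rw [h] at this
      nlinarith
  -- per-row consequence of strict concavity of log
  have key : ∀ j, T2 * (μ j c' - μ j c) < T1 * (μ j c'' - μ j c') := by
    intro j
    have hconc := log_secant (hpos j c) (hlt1 j) (hlt2 j)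
    rw [hA1 j, hA2 j] at hconc
    have h3 : α * (T2 * (μ j c' - μ j c)) < α * (T1 * (μ j c'' - μ j c')) := by nlinarith [hconc]
    exact (mul_lt_mul_iff_right₀ hα).mp h3
  have hsumlt : ∑ j, T2 * (μ j c' - μ j c) < ∑ j, T1 * (μ j c'' - μ j c') :=
    Finset.sum_lt_sum_of_nonempty ⟨k, Finset.mem_univ k⟩ (fun j _ => key j)
  rw [← Finset.mul_sum, ← Finset.mul_sum, ← hT1def, ← hT2def] at hsumlt
  nlinarith [hsumlt]
end

section
/- If a critical point μ of G satisfies the critical equations, then G(μ) = (1/(2q))((β−α)‖γ‖² + α) − (1/(2q)) ∑_{k=1}^s ∑_{c=1}^q (γ_k + q μ_{kc}) log μ_{kc}. -/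
theorem G_at_critical_point (s q : ℕ) (hq : 1 ≤ q) (α β : ℝ) (hα : 0 < α) (hαβ : α < β)
    (γ : Fin s → ℝ) (hγ : ∀ k, γ k ∈ Set.Ioo (0 : ℝ) 1) (hγ1 : ∑ k, γ k = 1)
    (μ : Fin s → Fin q → ℝ) (hpos : ∀ k c, 0 < μ k c) (hsum : ∀ k, ∑ c, μ k c = γ k)
    (hcrit : IsCritical s q α β γ μ) :
    G s q α β μ = 1 / (2 * q) * ((β - α) * (∑ k, (γ k) ^ 2) + α)
      - 1 / (2 * q) * ∑ k, ∑ c, (γ k + q * μ k c) * Real.log (μ k c) := by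
  classical
  have hq0 : (q : ℝ) ≠ 0 := Nat.cast_ne_zero.mpr (by omega)
  set A : ℝ := ∑ k, ∑ c, (μ k c) ^ 2 with hA
  set C : ℝ := ∑ k, ∑ c, ∑ k' ∈ Finset.univ.filter (fun k' => k' ≠ k), μ k c * μ k' c with hC
  set T : ℝ := ∑ k, ∑ c, μ k c * Real.log (μ k c) with hT
  set U : ℝ := ∑ k, γ k * ∑ c, Real.log (μ k c) with hU
  set g2 : ℝ := ∑ k, (γ k) ^ 2 with hg2
  -- log rewriting
  have hlog : ∀ k c, Real.log (μ k c / (∏ d, μ k d) ^ ((1 : ℝ) / q))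
      = Real.log (μ k c) - (1 / q) * ∑ d, Real.log (μ k d) := by
    intro k c
    have hprod : 0 < ∏ d, μ k d := Finset.prod_pos (fun d _ => hpos k d)
    rw [Real.log_div (hpos k c).ne' (Real.rpow_pos_of_pos hprod _).ne',
      Real.log_rpow hprod, Real.log_prod (fun d _ => (hpos k d).ne')]
  have herase : ∀ k : Fin s, ∑ k' ∈ Finset.univ.filter (fun k' => k' ≠ k), γ k' = 1 - γ k := by
    intro k
    rw [Finset.filter_ne', Finset.sum_erase_eq_sub (Finset.mem_univ k), hγ1]
  -- pointwise rewriting of the lhs of the critical equation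
  have hpt : ∀ k c, μ k c * (β * (μ k c - γ k / q)
        + α * ∑ k' ∈ Finset.univ.filter (fun k' => k' ≠ k), (μ k' c - γ k' / q))
      = β * (μ k c) ^ 2 - β * γ k / q * μ k c
        + α * (∑ k' ∈ Finset.univ.filter (fun k' => k' ≠ k), μ k c * μ k' c)
        - α * (1 - γ k) / q * μ k c := by
    intro k c
    have h1 : ∑ k' ∈ Finset.univ.filter (fun k' => k' ≠ k), (μ k' c - γ k' / q)
        = (∑ k' ∈ Finset.univ.filter (fun k' => k' ≠ k), μ k' c) - (1 - γ k) / q := by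
      rw [Finset.sum_sub_distrib, ← Finset.sum_div, herase k]
    rw [h1, ← Finset.mul_sum]
    ring
  -- summed critical equation
  have hsummed : ∑ k, ∑ c, (β * (μ k c) ^ 2 - β * γ k / q * μ k c
        + α * (∑ k' ∈ Finset.univ.filter (fun k' => k' ≠ k), μ k c * μ k' c)
        - α * (1 - γ k) / q * μ k c)
      = ∑ k, ∑ c, (μ k c * Real.log (μ k c) - μ k c * ((1 / q) * ∑ d, Real.log (μ k d))) := by
    refine Finset.sum_congr rfl fun k _ => Finset.sum_congr rfl fun c _ => ?_
    rw [← hpt k c, hcrit k c, hlog k c]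
    ring
  -- compute the lhs of hsummed
  have hLside : ∑ k, ∑ c, (β * (μ k c) ^ 2 - β * γ k / q * μ k c
        + α * (∑ k' ∈ Finset.univ.filter (fun k' => k' ≠ k), μ k c * μ k' c)
        - α * (1 - γ k) / q * μ k c)
      = β * A - β / q * g2 + α * C - α / q * (1 - g2) := by
    have hk : ∀ k : Fin s, ∑ c, (β * (μ k c) ^ 2 - β * γ k / q * μ k c
          + α * (∑ k' ∈ Finset.univ.filter (fun k' => k' ≠ k), μ k c * μ k' c)
          - α * (1 - γ k) / q * μ k c)
        = β * (∑ c, (μ k c) ^ 2) - β * γ k / q * γ k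
          + α * (∑ c, ∑ k' ∈ Finset.univ.filter (fun k' => k' ≠ k), μ k c * μ k' c)
          - α * (1 - γ k) / q * γ k := by
      intro k
      rw [Finset.sum_sub_distrib, Finset.sum_add_distrib, Finset.sum_sub_distrib,
        ← Finset.mul_sum, ← Finset.mul_sum, ← Finset.mul_sum, ← Finset.mul_sum, hsum k]
    rw [Finset.sum_congr rfl (fun k _ => hk k), Finset.sum_sub_distrib,
      Finset.sum_add_distrib, Finset.sum_sub_distrib, ← Finset.mul_sum, ← Finset.mul_sum]
    have h1 : ∑ k, β * γ k / q * γ k = β / q * g2 := by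
      rw [hg2, Finset.mul_sum]
      exact Finset.sum_congr rfl fun k _ => by ring
    have h2 : ∑ k, α * (1 - γ k) / q * γ k = α / q * (1 - g2) := by
      have : ∀ k : Fin s, α * (1 - γ k) / q * γ k = α / q * γ k - α / q * (γ k) ^ 2 := by
        intro k; ring
      rw [Finset.sum_congr rfl (fun k _ => this k), Finset.sum_sub_distrib,
        ← Finset.mul_sum, ← Finset.mul_sum, hγ1, hg2]
      ring
    rw [h1, h2, ← hA, ← hC]
  -- compute the rhs of hsummed
  have hRside : ∑ k, ∑ c, (μ k c * Real.log (μ k c) - μ k c * ((1 / q) * ∑ d, Real.log (μ k d)))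
      = T - 1 / q * U := by
    have hk : ∀ k : Fin s, ∑ c, (μ k c * Real.log (μ k c)
          - μ k c * ((1 / q) * ∑ d, Real.log (μ k d)))
        = (∑ c, μ k c * Real.log (μ k c)) - 1 / q * (γ k * ∑ d, Real.log (μ k d)) := by
      intro k
      rw [Finset.sum_sub_distrib, ← Finset.sum_mul, hsum k]
      ring
    rw [Finset.sum_congr rfl (fun k _ => hk k), Finset.sum_sub_distrib, ← Finset.mul_sum,
      ← hT, ← hU]
  have hkey : β * A - β / q * g2 + α * C - α / q * (1 - g2) = T - 1 / q * U := by
    rw [← hLside, ← hRside, hsummed]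
  -- rewrite G
  have hG : G s q α β μ = β / 2 * A + α / 2 * C - T := by
    rw [G, ← hT]
    congr 1
    · congr 1
      · rw [hA, Finset.sum_comm]
        simp [Finset.mul_sum]
      · rw [hC, Finset.sum_comm]
        simp [Finset.mul_sum]
  -- rewrite the rhs sum
  have hR : ∑ k, ∑ c, (γ k + q * μ k c) * Real.log (μ k c) = U + q * T := by
    have hk : ∀ k : Fin s, ∑ c, (γ k + q * μ k c) * Real.log (μ k c)
        = γ k * ∑ c, Real.log (μ k c) + q * ∑ c, μ k c * Real.log (μ k c) := by
      intro k
      rw [Finset.mul_sum, Finset.mul_sum, ← Finset.sum_add_distrib]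
      exact Finset.sum_congr rfl fun c _ => by ring
    rw [Finset.sum_congr rfl (fun k _ => hk k), Finset.sum_add_distrib, ← Finset.mul_sum,
      ← hU, ← hT]
  rw [hG, hR]
  clear_value A C T U g2
  field_simp at hkey ⊢
  linarith [hkey]
end

section
/- If q ≤ 2r (with r ≤ q−1), then w is strictly increasing on [1/(sq), 1/(sr)), i.e. w'(x) > 0 for x ∈ (1/(sq), 1/(sr)). -/
noncomputable def w (s q r : ℕ) (x : ℝ) : ℝ :=
  -(((q : ℝ) - r) + q * (1 - s * r * x)) * Real.log ((1 - s * r * x) / (s * ((q : ℝ) - r)))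
    - r * (1 + s * q * x) * Real.log x

noncomputable def w' (s q r : ℕ) (x : ℝ) : ℝ :=
  (s : ℝ) * r * q * Real.log ((1 - s * r * x) / (s * ((q : ℝ) - r) * x))
    + r * ((s : ℝ) * q * x - 1) / (x * (1 - s * r * x))

lemma two_log_le {y : ℝ} (hy : 1 ≤ y) : 2 * Real.log y ≤ y - y⁻¹ := by
  rcases eq_or_lt_of_le hy with h | h
  · simp [← h]
  · have hl : 0 < Real.log y := Real.log_pos h
    have hs := Real.self_lt_sinh_iff.mpr hl
    rw [Real.sinh_eq, Real.exp_log (by linarith), Real.exp_neg,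
      Real.exp_log (by linarith)] at hs
    linarith

lemma hasDerivAt_w (s q r : ℕ) (x : ℝ) (hS : 1 ≤ (s:ℝ)) (hR : 1 ≤ (r:ℝ))
    (hRQ : (r:ℝ) + 1 ≤ q) (hx0 : 0 < x) (hx1 : (s:ℝ) * r * x < 1) :
    HasDerivAt (w s q r) (w' s q r x) x := by
  set S := (s:ℝ) with hSdef; set R := (r:ℝ) with hRdef; set Q := (q:ℝ) with hQdef
  have hA : (0:ℝ) < 1 - S * R * x := by linarith
  have hQR : (0:ℝ) < Q - R := by linarith
  have hc : (0:ℝ) < S * (Q - R) := by positivity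
  have h1 : HasDerivAt (fun y : ℝ => (1 - S * R * y) / (S * (Q - R)))
      (-(S * R) / (S * (Q - R))) x := by
    have : HasDerivAt (fun y : ℝ => 1 - S * R * y) (-(S * R)) x := by
      simpa using ((hasDerivAt_id x).const_mul (S * R)).const_sub 1
    exact this.div_const _
  have hfx : (1 - S * R * x) / (S * (Q - R)) ≠ 0 := by positivity
  have hlog1 : HasDerivAt (fun y : ℝ => Real.log ((1 - S * R * y) / (S * (Q - R))))
      ((-(S * R) / (S * (Q - R))) / ((1 - S * R * x) / (S * (Q - R)))) x := h1.log hfx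
  have hg : HasDerivAt (fun y : ℝ => -((Q - R) + Q * (1 - S * R * y))) (Q * (S * R)) x := by
    have h2 : HasDerivAt (fun y : ℝ => 1 - S * R * y) (-(S * R)) x := by
      simpa using ((hasDerivAt_id x).const_mul (S * R)).const_sub 1
    have := ((h2.const_mul Q).const_add (Q - R)).neg
    exact this.congr_deriv (by ring)
  have hk : HasDerivAt (fun y : ℝ => R * (1 + S * Q * y)) (R * (S * Q)) x := by
    have : HasDerivAt (fun y : ℝ => 1 + S * Q * y) (S * Q) x := by
      simpa using ((hasDerivAt_id x).const_mul (S * Q)).const_add 1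
    exact this.const_mul R
  have hlogx := Real.hasDerivAt_log hx0.ne'
  have hw : HasDerivAt (w s q r)
      (Q * (S * R) * Real.log ((1 - S * R * x) / (S * (Q - R)))
        + (-((Q - R) + Q * (1 - S * R * x)))
          * ((-(S * R) / (S * (Q - R))) / ((1 - S * R * x) / (S * (Q - R))))
        - (R * (S * Q) * Real.log x + R * (1 + S * Q * x) * x⁻¹)) x := by
    exact (hg.mul hlog1).sub (hk.mul hlogx)
  convert hw using 1
  have hlsplit : Real.log ((1 - S * R * x) / (S * (Q - R) * x))
      = Real.log ((1 - S * R * x) / (S * (Q - R))) - Real.log x := by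
    rw [← div_div, Real.log_div hfx hx0.ne']
  show S * R * Q * Real.log ((1 - S * R * x) / (S * (Q - R) * x))
      + R * (S * Q * x - 1) / (x * (1 - S * R * x)) = _
  rw [hlsplit]
  field_simp
  ring

lemma w'_pos_real (S R Q x : ℝ) (hS : 1 ≤ S) (hR : 1 ≤ R)
    (hRQ : R + 1 ≤ Q) (hQ2R : Q ≤ 2 * R)
    (hxl : 1 / (S * Q) < x) (hxr : x < 1 / (S * R)) :
    0 < S * R * Q * Real.log ((1 - S * R * x) / (S * (Q - R) * x))
      + R * (S * Q * x - 1) / (x * (1 - S * R * x)) := by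
  have hQR : (0:ℝ) < Q - R := by linarith
  have hSQ : (0:ℝ) < S * Q := by nlinarith
  have hSR : (0:ℝ) < S * R := by nlinarith
  have hx0 : 0 < x := lt_trans (by positivity) hxl
  have h1 : 1 < S * Q * x := by
    rw [div_lt_iff₀ hSQ] at hxl; nlinarith
  have hA : 0 < 1 - S * R * x := by
    rw [lt_div_iff₀ hSR] at hxr; nlinarith
  set u := (1 - S * R * x) / (S * (Q - R) * x) with hudef
  have hden : (0:ℝ) < S * (Q - R) * x := by positivity
  have hu0 : 0 < u := div_pos hA hden
  have hu_eq : u * (S * (Q - R) * x) = 1 - S * R * x := div_mul_cancel₀ _ hden.ne'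
  have hu1 : u < 1 := by
    rw [hudef, div_lt_one hden]; nlinarith
  set v := Real.sqrt u with hvdef
  have hv0 : 0 < v := Real.sqrt_pos.mpr hu0
  have hvsq : v ^ 2 = u := Real.sq_sqrt hu0.le
  have hv1 : v < 1 := by
    rw [hvdef, show (1:ℝ) = Real.sqrt 1 by simp]
    exact Real.sqrt_lt_sqrt hu0.le hu1
  have hlog : v - v⁻¹ ≤ Real.log u := by
    have h2 : 2 * Real.log v⁻¹ ≤ v⁻¹ - (v⁻¹)⁻¹ :=
      two_log_le ((one_le_inv₀ hv0).mpr hv1.le)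
    rw [Real.log_inv, inv_inv] at h2
    have hlu : Real.log u = 2 * Real.log v := by
      rw [hvdef, Real.log_sqrt hu0.le]; ring
    linarith
  clear_value u v
  have key : Q * (1 - S * R * x) < (Q - R) * v := by
    have hkey2 : (Q * (1 - S * R * x)) ^ 2 < ((Q - R) * v) ^ 2 := by
      rw [mul_pow, mul_pow, hvsq]
      have hf : 0 < S * Q * R * x - Q + R := by nlinarith
      have hprod : 0 < (1 - S * R * x) * ((S * Q * x - 1) * (S * Q * R * x - Q + R)) :=
        mul_pos hA (mul_pos (by linarith) hf)
      nlinarith [hu_eq, mul_pos hden hu0, hprod, mul_pos hSR hx0]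
    exact lt_of_pow_lt_pow_left₀ 2 (by positivity) hkey2
  have e3 : (1 - u) * (S * (Q - R) * x) = S * Q * x - 1 := by
    linear_combination -hu_eq
  have e2 : v⁻¹ - v = (S * Q * x - 1) / (S * (Q - R) * x * v) := by
    rw [eq_div_iff (by positivity)]
    have hvinv : v * v⁻¹ = 1 := mul_inv_cancel₀ hv0.ne'
    have h5 : (v⁻¹ - v) * (S * (Q - R) * x * v) = (1 - u) * (S * (Q - R) * x) := by
      linear_combination (S * (Q - R) * x) * hvinv - (S * (Q - R) * x) * hvsq
    rw [h5, e3]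
  have hstep : S * R * Q * ((S * Q * x - 1) / (S * (Q - R) * x * v))
      < R * (S * Q * x - 1) / (x * (1 - S * R * x)) := by
    have c0 : 0 < R * S * x * (S * Q * x - 1) :=
      mul_pos (by positivity) (by linarith)
    have hkey3 := mul_lt_mul_of_pos_left key c0
    rw [← mul_div_assoc, div_lt_div_iff₀ (by positivity) (by positivity)]
    nlinarith [hkey3]
  have hmul : S * R * Q * (v - v⁻¹) ≤ S * R * Q * Real.log u :=
    mul_le_mul_of_nonneg_left hlog
      (by have : (0:ℝ) < S := by linarith
          have : (0:ℝ) < R := by linarith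
          have : (0:ℝ) < Q := by linarith
          positivity)
  have h6 : S * R * Q * (v - v⁻¹)
      = -(S * R * Q * ((S * Q * x - 1) / (S * (Q - R) * x * v))) := by
    rw [← e2]; ring
  linarith [hmul, hstep]

theorem w_strictMono_of_q_le_two_r (s q r : ℕ) (hs : 1 ≤ s) (hr : 1 ≤ r) (hrq : r ≤ q - 1)
    (hq2r : q ≤ 2 * r) :
    StrictMonoOn (w s q r) (Set.Ico (1 / ((s : ℝ) * q)) (1 / ((s : ℝ) * r))) ∧
      ∀ x ∈ Set.Ioo (1 / ((s : ℝ) * q)) (1 / ((s : ℝ) * r)), 0 < w' s q r x := by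
  have hq' : r + 1 ≤ q := by omega
  have hS : 1 ≤ (s:ℝ) := by exact_mod_cast hs
  have hR : 1 ≤ (r:ℝ) := by exact_mod_cast hr
  have hRQ : (r:ℝ) + 1 ≤ (q:ℝ) := by exact_mod_cast hq'
  have hQ2R : (q:ℝ) ≤ 2 * (r:ℝ) := by exact_mod_cast hq2r
  have hSR : (0:ℝ) < (s:ℝ) * (r:ℝ) := by nlinarith
  have hSQ : (0:ℝ) < (s:ℝ) * (q:ℝ) := by nlinarith
  have hpos : ∀ x ∈ Set.Ioo (1 / ((s : ℝ) * q)) (1 / ((s : ℝ) * r)), 0 < w' s q r x :=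
    fun x hx => w'_pos_real (s:ℝ) (r:ℝ) (q:ℝ) x hS hR hRQ hQ2R hx.1 hx.2
  have hderiv : ∀ x ∈ Set.Ico (1 / ((s : ℝ) * q)) (1 / ((s : ℝ) * r)),
      HasDerivAt (w s q r) (w' s q r x) x := by
    intro x hx
    have hx0 : 0 < x := lt_of_lt_of_le (by positivity) hx.1
    have hx1 : (s:ℝ) * r * x < 1 := by
      have := hx.2
      rw [lt_div_iff₀ hSR] at this; nlinarith
    exact hasDerivAt_w s q r x hS hR hRQ hx0 hx1
  refine ⟨?_, hpos⟩
  apply strictMonoOn_of_deriv_pos (convex_Ico _ _)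
  · exact fun x hx => (hderiv x hx).continuousAt.continuousWithinAt
  · intro x hx
    rw [interior_Ico] at hx
    rw [(hderiv x ⟨hx.1.le, hx.2⟩).deriv]
    exact hpos x hx
end
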